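/- For all real 0 < α < 1 and θ > 0, the defect d^sym(1,3) of the symmetrized (α, θ) splitting rule vanishes if and only if θ = 1−α or θ = 2−α. -/
import Mathlib


/-- Rising factorial `[x]_j = x (x+1) ⋯ (x+j-1)`, with `[x]_0 = 1`. -/
noncomputable def risingFactorial (x : ℝ) : ℕ → ℝ
  | 0 => 1
  | n + 1 => risingFactorial x n * (x + n)

/-- The decrement matrix
`q_{α,θ}(n, m) = C(n,m) · ((n−m)α + mθ)/n · [1−α]_{m−1} / [n−m+θ]_m` for `1 ≤ m ≤ n`,
and `q_{α,θ}(n, m) = 0` otherwise. -/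
noncomputable def decrementMatrix (α θ : ℝ) (n m : ℕ) : ℝ :=
  if 1 ≤ m ∧ m ≤ n then
    (n.choose m : ℝ) * ((((n : ℝ) - m) * α + m * θ) / n) *
      risingFactorial (1 - α) (m - 1) / risingFactorial ((n : ℝ) - m + θ) m
  else 0

/-- `q^bias(x, y) = q_{α,θ}(x+y−1, x)`. -/
noncomputable def qBias (α θ : ℝ) (x y : ℕ) : ℝ := decrementMatrix α θ (x + y - 1) x

/-- The symmetrization `q^sym(x, y) = (q^bias(x,y) + q^bias(y,x))/2`. -/
noncomputable def qSym (α θ : ℝ) (x y : ℕ) : ℝ := (qBias α θ x y + qBias α θ y x) / 2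

/-- The sampling-consistency defect
`d^sym(x, y) = q^sym(x,y)·(1 − (q^sym(1, x+y) + q^sym(x+y, 1))/(x+y+1))
  − q^sym(x+1, y)·(x+1)/(x+y+1) − q^sym(x, y+1)·(y+1)/(x+y+1)`. -/
noncomputable def dSym (α θ : ℝ) (x y : ℕ) : ℝ :=
  qSym α θ x y * (1 - (qSym α θ 1 (x + y) + qSym α θ (x + y) 1) / ((x : ℝ) + y + 1))
    - qSym α θ (x + 1) y * ((x : ℝ) + 1) / ((x : ℝ) + y + 1)
    - qSym α θ x (y + 1) * ((y : ℝ) + 1) / ((x : ℝ) + y + 1)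


set_option maxHeartbeats 1000000 in
/-- the defect `d^sym(1,3)` vanishes iff `θ = 1−α` or `θ = 2−α`. -/
theorem dSym_one_three_eq_zero_iff (α θ : ℝ) (hα0 : 0 < α) (hα1 : α < 1) (hθ : 0 < θ) :
    dSym α θ 1 3 = 0 ↔ θ = 1 - α ∨ θ = 2 - α := by
  have h1 : θ + 1 ≠ 0 := by linarith
  have h2 : θ + 2 ≠ 0 := by linarith
  have h3 : θ + 3 ≠ 0 := by linarith
  have h0 : θ ≠ 0 := ne_of_gt hθ
  have b13 : qBias α θ 1 3 = (2 * α + θ) / (θ + 2) := by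
    simp only [qBias, decrementMatrix]
    norm_num [risingFactorial, Nat.choose]
    field_simp
    ring_nf
    try tauto
  have b31 : qBias α θ 3 1 = (1 - α) * (2 - α) / ((θ + 1) * (θ + 2)) := by
    simp only [qBias, decrementMatrix]
    norm_num [risingFactorial, Nat.choose]
    field_simp
    ring_nf
    try tauto
  have b14 : qBias α θ 1 4 = (3 * α + θ) / (θ + 3) := by
    simp only [qBias, decrementMatrix]
    norm_num [risingFactorial, Nat.choose]
    field_simp
    ring_nf
    try tauto
  have b41 : qBias α θ 4 1 = (1 - α) * (2 - α) * (3 - α) / ((θ + 1) * (θ + 2) * (θ + 3)) := by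
    simp only [qBias, decrementMatrix]
    norm_num [risingFactorial, Nat.choose]
    field_simp
    ring_nf
    try tauto
  have b23 : qBias α θ 2 3 = 3 * (α + θ) * (1 - α) / ((θ + 2) * (θ + 3)) := by
    simp only [qBias, decrementMatrix]
    norm_num [risingFactorial, Nat.choose]
    field_simp
    ring_nf
    try tauto
  have b32 : qBias α θ 3 2 = (α + 3 * θ) * (1 - α) * (2 - α) / ((θ + 1) * (θ + 2) * (θ + 3)) := by
    simp only [qBias, decrementMatrix]
    norm_num [risingFactorial, Nat.choose]
    field_simp
    ring_nf
    try tauto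
  have key : dSym α θ 1 3 =
      (θ + α - 1) * (θ + α - 2) * ((1 - α) * (θ ^ 2 + 3 * θ + 3 * α - α ^ 2)) /
        (10 * (θ + 1) ^ 2 * (θ + 2) ^ 2 * (θ + 3)) := by
    have : dSym α θ 1 3 = qSym α θ 1 3 * (1 - (qSym α θ 1 4 + qSym α θ 4 1) / 5)
        - qSym α θ 2 3 * 2 / 5 - qSym α θ 1 4 * 4 / 5 := by
      simp only [dSym]; norm_num
    rw [this]
    simp only [qSym, b13, b31, b14, b41, b23, b32]
    field_simp
    ring
  have hden : 10 * (θ + 1) ^ 2 * (θ + 2) ^ 2 * (θ + 3) ≠ 0 := by positivity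
  have hpos : (1 - α) * (θ ^ 2 + 3 * θ + 3 * α - α ^ 2) ≠ 0 := by
    have hq : θ ^ 2 + 3 * θ + 3 * α - α ^ 2 > 0 := by nlinarith
    have h1a : (1 : ℝ) - α > 0 := by linarith
    positivity
  rw [key, div_eq_zero_iff]
  constructor
  · rintro (h | h)
    · have h' : (θ + α - 1) * (θ + α - 2) = 0 :=
        (mul_eq_zero.mp h).resolve_right hpos
      rcases mul_eq_zero.mp h' with h'' | h''
      · left; linarith
      · right; linarith
    · exact absurd h hden
  · rintro (h | h) <;> left
    · have h' : θ + α - 1 = 0 := by linarith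
      rw [h']; ring
    · have h' : θ + α - 2 = 0 := by linarith
      rw [h']; ring
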